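/- Let p be an odd prime and n = p² + p + 1. Then the complete graph K_n contains n(p+1)/2 pairwise edge-disjoint trees (each with at least one edge) such that every two of the trees share at least one vertex. Consequently, the line graph of K_n has a clique minor of order n(p+1)/2. -/

import Mathlib

open SimpleGraph Matrix

lemma pathGraph_isAcyclic (m : ℕ) : (pathGraph m).IsAcyclic := by
  have key : ∀ (a b : Fin m), a.val + 1 = b.val → ∀ p : (pathGraph m).Walk a b,
      s(a, b) ∈ p.edges := by
    intro a b hab p
    obtain ⟨d, hd, hdS, hdS'⟩ := p.exists_boundary_dart {x : Fin m | x.val ≤ a.val}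
      (by simp) (by simp; omega)
    have hadj := d.adj
    rw [pathGraph_adj] at hadj
    simp only [Set.mem_setOf_eq, not_le] at hdS hdS'
    have h1 : d.fst = a := by apply Fin.ext; omega
    have h2 : d.snd = b := by apply Fin.ext; omega
    have : s(a, b) = d.edge := by simp [Dart.edge, ← h1, ← h2]
    rw [this]
    exact List.mem_map_of_mem (f := Dart.edge) hd
  rw [isAcyclic_iff_forall_adj_isBridge]
  intro v w hvw
  rw [isBridge_iff_adj_and_forall_walk_mem_edges]
  intro p
  rw [pathGraph_adj] at hvw
  rcases hvw with h | h
  · exact key v w h p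
  · have := key w v h p.reverse
    rw [Walk.edges_reverse, List.mem_reverse, Sym2.eq_swap] at this
    exact this

section MapLemmas
variable {V W : Type*} {G : SimpleGraph V} (f : V ↪ W)

lemma support_map_graph : (G.map f).support = f '' G.support := by
  ext x
  simp only [SimpleGraph.mem_support, SimpleGraph.map_adj, Set.mem_image]
  constructor
  · rintro ⟨y, a, b, hab, rfl, rfl⟩
    exact ⟨a, ⟨b, hab⟩, rfl⟩
  · rintro ⟨a, ⟨b, hab⟩, rfl⟩
    exact ⟨f b, a, b, hab, rfl, rfl⟩

/-- The homomorphism from `G` to `G.map f`. -/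
def mapHom : G →g G.map f := ⟨f, fun h => map_adj_apply.mpr h⟩

lemma mapHom_apply (a : V) : mapHom (G := G) f a = f a := rfl

lemma walk_map_lift : ∀ {x y : W} (p : (G.map f).Walk x y) {a b : V}
    (ha : f a = x) (hb : f b = y), ∃ q : G.Walk a b, p.copy ha.symm hb.symm = q.map (mapHom f) := by
  intro x y p
  induction p with
  | nil =>
    intro a b ha hb
    have : a = b := f.injective (ha.trans hb.symm)
    subst this
    subst ha
    exact ⟨Walk.nil, rfl⟩
  | @cons x z y h p ih =>
    intro a b ha hb
    obtain ⟨a', c, hac, ha', hc⟩ := (SimpleGraph.map_adj f G x z).mp h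
    have : a' = a := f.injective (ha'.trans ha.symm)
    subst this
    obtain ⟨q, hq⟩ := ih (a := c) (b := b) hc hb
    subst ha hc
    refine ⟨Walk.cons hac q, ?_⟩
    rw [Walk.map_cons, ← hq]
    subst hb
    rfl

lemma isAcyclic_map (hG : G.IsAcyclic) : (G.map f).IsAcyclic := by
  intro v c hc
  cases c with
  | nil => exact hc.ne_nil rfl
  | @cons _ z _ h p =>
    obtain ⟨a, b, hab, ha, hb⟩ := (SimpleGraph.map_adj f G v z).mp h
    obtain ⟨q, hq⟩ := walk_map_lift f (Walk.cons h p) (a := a) (b := a) ha ha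
    have hc' : (q.map (mapHom f)).IsCycle := by
      rw [← hq]
      exact (Walk.isCycle_copy ..).mpr hc
    rw [Walk.map_isCycle_iff_of_injective f.injective] at hc'
    exact hG q hc'

lemma connected_induce_map (hG : G.Connected) :
    ((G.map f).induce (Set.range f)).Connected := by
  have iso : G ≃g (G.map f).induce (Set.range f) :=
    { Equiv.ofInjective f f.injective with
      map_rel_iff' := by
        intro a b
        simp [SimpleGraph.map_adj_apply] }
  exact iso.connected_iff.mp hG

end MapLemmas

section Plane
variable (p : ℕ) [Fact p.Prime]

/-- The point set of the projective plane over `ZMod p`, with normalized coordinates. -/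
abbrev Pt := (ZMod p × ZMod p) ⊕ (ZMod p) ⊕ Unit

/-- Coordinates of a point. -/
def vec : Pt p → (Fin 3 → ZMod p)
  | .inl (y, z) => ![1, y, z]
  | .inr (.inl z) => ![0, 1, z]
  | .inr (.inr _) => ![0, 0, 1]

/-- Normalization map. -/
noncomputable def nrm (v : Fin 3 → ZMod p) : Pt p :=
  if v 0 ≠ 0 then .inl ((v 0)⁻¹ * v 1, (v 0)⁻¹ * v 2)
  else if v 1 ≠ 0 then .inr (.inl ((v 1)⁻¹ * v 2))
  else .inr (.inr ())

variable {p}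

lemma vec_ne_zero (x : Pt p) : vec p x ≠ 0 := by
  rcases x with ⟨y, z⟩ | z | u <;>
  · simp only [_root_.vec]
    intro h
    have := congrFun h
    first
    | exact one_ne_zero (α := ZMod p) (by simpa using this 0)
    | exact one_ne_zero (α := ZMod p) (by simpa using this 1)
    | exact one_ne_zero (α := ZMod p) (by simpa using this 2)

lemma nrm_vec (x : Pt p) : nrm p (vec p x) = x := by
  rcases x with ⟨y, z⟩ | z | u <;> simp [_root_.vec, nrm]

lemma vec_nrm (v : Fin 3 → ZMod p) (hv : v ≠ 0) :
    ∃ c : ZMod p, c ≠ 0 ∧ vec p (nrm p v) = c • v := by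
  by_cases h0 : v 0 = 0
  · by_cases h1 : v 1 = 0
    · have h2 : v 2 ≠ 0 := by
        intro h2
        apply hv
        funext i
        fin_cases i <;> assumption
      refine ⟨(v 2)⁻¹, inv_ne_zero h2, ?_⟩
      simp only [nrm, h0, h1, ne_eq, not_true_eq_false, if_false, not_false_eq_true, if_neg]
      funext i
      fin_cases i <;> simp [_root_.vec, h0, h1, inv_mul_cancel₀ h2]
    · refine ⟨(v 1)⁻¹, inv_ne_zero h1, ?_⟩
      simp only [nrm, h0, ne_eq, not_true_eq_false, if_false, h1, not_false_eq_true, if_true]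
      funext i
      fin_cases i <;> simp [_root_.vec, h0, inv_mul_cancel₀ h1, mul_comm (v 1)⁻¹]
  · refine ⟨(v 0)⁻¹, inv_ne_zero h0, ?_⟩
    simp only [nrm, ne_eq, h0, not_false_eq_true, if_true]
    funext i
    fin_cases i <;> simp [_root_.vec, inv_mul_cancel₀ h0, mul_comm (v 0)⁻¹]

lemma nrm_smul (v : Fin 3 → ZMod p) (c : ZMod p) (hc : c ≠ 0) :
    nrm p (c • v) = nrm p v := by
  have e : ∀ i, (c • v) i = c * v i := fun i => rfl
  by_cases h0 : v 0 = 0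
  · by_cases h1 : v 1 = 0
    · simp [nrm, e, h0, h1]
    · simp [nrm, e, h0, h1, hc, mul_ne_zero hc h1, mul_inv, mul_assoc,
        inv_mul_cancel_left₀ hc]
  · simp [nrm, e, h0, hc, mul_ne_zero hc h0, mul_inv, mul_assoc,
      inv_mul_cancel_left₀ hc]

lemma pt_eq_of_smul (x y : Pt p) (c : ZMod p) (hc : c ≠ 0)
    (h : vec p x = c • vec p y) : x = y := by
  have := congrArg (nrm p) h
  rwa [nrm_vec, nrm_smul _ _ hc, nrm_vec] at this


end Plane

section Plane2
variable (p : ℕ) [Fact p.Prime]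

/-- dot product with a fixed vector, as a linear map -/
def dotl (w : Fin 3 → ZMod p) : (Fin 3 → ZMod p) →ₗ[ZMod p] ZMod p where
  toFun v := v ⬝ᵥ w
  map_add' u v := add_dotProduct u v w
  map_smul' c v := smul_dotProduct c v w

variable {p}

lemma dotl_apply (w v : Fin 3 → ZMod p) : dotl p w v = v ⬝ᵥ w := rfl

lemma dot_nondeg {w : Fin 3 → ZMod p} (h : ∀ v, v ⬝ᵥ w = 0) : w = 0 := by
  funext i
  simpa using h (Pi.single i 1)

lemma finrank_V3 : Module.finrank (ZMod p) (Fin 3 → ZMod p) = 3 := by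
  simp [Module.finrank_pi]

lemma finrank_ker_dotl (w : Fin 3 → ZMod p) (hw : w ≠ 0) :
    Module.finrank (ZMod p) (LinearMap.ker (dotl p w)) = 2 := by
  have hr : LinearMap.range (dotl p w) = ⊤ := by
    obtain ⟨i, hi⟩ : ∃ i, w i ≠ 0 := by
      by_contra h
      push_neg at h
      exact hw (funext h)
    rw [LinearMap.range_eq_top]
    intro y
    refine ⟨(y * (w i)⁻¹) • (Pi.single i 1 : Fin 3 → ZMod p), ?_⟩
    rw [dotl_apply, smul_dotProduct, single_dotProduct]
    field_simp
    rw [smul_eq_mul, div_mul_cancel₀ y hi]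
  have := LinearMap.finrank_range_add_finrank_ker (dotl p w)
  rw [hr, finrank_top, finrank_V3, Module.finrank_self] at this
  omega


lemma exists_line_param (ℓ : Pt p) :
    ∃ g : (ZMod p) ⊕ Unit → Pt p, Function.Injective g ∧
      Set.range g = {x : Pt p | vec p x ⬝ᵥ vec p ℓ = 0} := by
  set K := LinearMap.ker (dotl p (vec p ℓ)) with hK
  have hrank : Module.finrank (ZMod p) K = 2 := finrank_ker_dotl _ (vec_ne_zero ℓ)
  let b : Module.Basis (Fin 2) (ZMod p) K := Module.finBasisOfFinrankEq _ _ hrank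
  set u : Fin 3 → ZMod p := (b 0 : Fin 3 → ZMod p) with hu
  set w : Fin 3 → ZMod p := (b 1 : Fin 3 → ZMod p) with hw
  have memK : ∀ s t : ZMod p, (s • u + t • w) ⬝ᵥ vec p ℓ = 0 := by
    intro s t
    have h1 : (s • (b 0) + t • (b 1) : K).val ∈ K := (s • (b 0) + t • (b 1) : K).2
    have h2 : ((s • (b 0) + t • (b 1) : K) : Fin 3 → ZMod p) = s • u + t • w := by
      push_cast
      rfl
    rw [h2] at h1
    simpa only [hK, LinearMap.mem_ker, dotl_apply] using h1
  have Ezero : ∀ s t : ZMod p, s • u + t • w = 0 → s = 0 ∧ t = 0 := by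
    intro s t h
    have h2 : (s • (b 0) + t • (b 1) : K) = 0 := by
      apply Subtype.ext
      push_cast
      exact h
    have hr := congrArg b.repr h2
    rw [map_add, _root_.map_smul, _root_.map_smul, Module.Basis.repr_self, Module.Basis.repr_self, map_zero] at hr
    constructor
    · have := congrArg (fun f => f 0) hr
      simpa [Finsupp.single_apply] using this
    · have := congrArg (fun f => f 1) hr
      simpa [Finsupp.single_apply] using this
  have une : ∀ t : ZMod p, u + t • w ≠ 0 := by
    intro t h
    have := Ezero 1 t (by rw [one_smul]; exact h)
    exact one_ne_zero this.1
  have wne : w ≠ 0 := by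
    intro h
    have := Ezero 0 1 (by rw [zero_smul, one_smul, zero_add]; exact h)
    exact one_ne_zero this.2
  classical
  refine ⟨fun s => Sum.elim (fun t => nrm p (u + t • w)) (fun _ => nrm p w) s, ?_, ?_⟩
  · -- injectivity
    rintro (t | t') (s | s') h <;> simp only [Sum.elim_inl, Sum.elim_inr] at h
    · -- inl inl
      obtain ⟨c, hc, hcv⟩ := vec_nrm (u + t • w) (une t)
      obtain ⟨c', hc', hcv'⟩ := vec_nrm (u + s • w) (une s)
      rw [h, hcv'] at hcv
      have key : (c' - c) • u + (c' * s - c * t) • w = 0 := by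
        have : c' • (u + s • w) - c • (u + t • w) = 0 := by rw [← hcv]; abel
        rw [smul_add, smul_add, smul_smul, smul_smul] at this
        rw [sub_smul, sub_smul]
        rw [← this]
        abel
      obtain ⟨e1, e2⟩ := Ezero _ _ key
      have hcc : c' = c := by linear_combination (norm := ring_nf) e1
      have : c * s = c * t := by
        have := sub_eq_zero.mp e2
        rw [hcc] at this
        exact this
      have := mul_left_cancel₀ hc this
      rw [this]
    · -- inl inr
      obtain ⟨c, hc, hcv⟩ := vec_nrm (u + t • w) (une t)
      obtain ⟨c', hc', hcv'⟩ := vec_nrm w wne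
      rw [h, hcv'] at hcv
      have key : c • u + (c * t - c') • w = 0 := by
        rw [sub_smul, ← smul_smul]
        have : c • (u + t • w) = c' • w := hcv.symm
        rw [smul_add] at this
        rw [← sub_eq_zero] at this
        rw [← this]
        abel
      exact absurd (Ezero _ _ key).1 hc
    · -- inr inl
      obtain ⟨c, hc, hcv⟩ := vec_nrm w wne
      obtain ⟨c', hc', hcv'⟩ := vec_nrm (u + s • w) (une s)
      rw [h, hcv'] at hcv
      have key : c' • u + (c' * s - c) • w = 0 := by
        rw [sub_smul, ← smul_smul]
        have : c' • (u + s • w) = c • w := hcv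
        rw [smul_add] at this
        rw [← sub_eq_zero] at this
        rw [← this]
        abel
      exact absurd (Ezero _ _ key).1 hc'
    · rfl
  · -- range
    ext x
    simp only [Set.mem_range, Set.mem_setOf_eq]
    constructor
    · rintro ⟨(t | t), rfl⟩ <;> simp only [Sum.elim_inl, Sum.elim_inr]
      · obtain ⟨c, hc, hcv⟩ := vec_nrm (u + t • w) (une t)
        rw [hcv, smul_dotProduct,
          show (u + t • w) = (1 : ZMod p) • u + t • w by rw [one_smul], memK, smul_zero]
      · obtain ⟨c, hc, hcv⟩ := vec_nrm w wne
        rw [hcv, smul_dotProduct,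
          show w = (0 : ZMod p) • u + (1 : ZMod p) • w by rw [zero_smul, one_smul, zero_add],
          memK, smul_zero]
    · intro hx
      have hxK : vec p x ∈ K := by rw [hK, LinearMap.mem_ker, dotl_apply]; exact hx
      set z : K := ⟨vec p x, hxK⟩ with hz
      have hsum := b.sum_repr z
      rw [Fin.sum_univ_two] at hsum
      set s := b.repr z 0 with hs
      set t := b.repr z 1 with ht
      have hcoe : s • u + t • w = vec p x := by
        have := congrArg (Subtype.val) hsum
        push_cast at this
        exact this
      by_cases hs0 : s = 0
      · refine ⟨Sum.inr (), ?_⟩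
        simp only [Sum.elim_inr]
        have hvx : vec p x = t • w := by rw [← hcoe, hs0, zero_smul, zero_add]
        have ht0 : t ≠ 0 := by
          intro ht0
          exact vec_ne_zero x (by rw [hvx, ht0, zero_smul])
        rw [← nrm_vec x, hvx, nrm_smul _ _ ht0]
      · refine ⟨Sum.inl (s⁻¹ * t), ?_⟩
        simp only [Sum.elim_inl]
        have hvx : vec p x = s • (u + (s⁻¹ * t) • w) := by
          rw [smul_add, smul_smul, ← mul_assoc, mul_inv_cancel₀ hs0, one_mul, hcoe]
        rw [← nrm_vec x, hvx, nrm_smul _ _ hs0]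

lemma line_inter {ℓ ℓ' : Pt p} (hne : ℓ ≠ ℓ') :
    ∃! x : Pt p, vec p x ⬝ᵥ vec p ℓ = 0 ∧ vec p x ⬝ᵥ vec p ℓ' = 0 := by
  have finFF : Module.finrank (ZMod p) (ZMod p × ZMod p) = 2 := by
    rw [Module.finrank_prod, Module.finrank_self]
  -- existence
  have hex : ∃ x : Pt p, vec p x ⬝ᵥ vec p ℓ = 0 ∧ vec p x ⬝ᵥ vec p ℓ' = 0 := by
    set g := LinearMap.prod (dotl p (vec p ℓ)) (dotl p (vec p ℓ')) with hg
    have : LinearMap.ker g ≠ ⊥ := by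
      intro hbot
      have hinj : Function.Injective g := LinearMap.ker_eq_bot.mp hbot
      have := LinearMap.finrank_le_finrank_of_injective hinj
      rw [finrank_V3, finFF] at this
      omega
    obtain ⟨v, hv, hv0⟩ := (Submodule.ne_bot_iff _).mp this
    rw [LinearMap.mem_ker, hg] at hv
    have h1 : v ⬝ᵥ vec p ℓ = 0 := congrArg Prod.fst hv
    have h2 : v ⬝ᵥ vec p ℓ' = 0 := congrArg Prod.snd hv
    obtain ⟨c, hc, hcv⟩ := vec_nrm v hv0
    exact ⟨nrm p v, by rw [hcv, smul_dotProduct, h1, smul_zero],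
      by rw [hcv, smul_dotProduct, h2, smul_zero]⟩
  obtain ⟨x, hx1, hx2⟩ := hex
  refine ⟨x, ⟨hx1, hx2⟩, ?_⟩
  rintro y ⟨hy1, hy2⟩
  -- uniqueness
  set g := LinearMap.prod (dotl p (vec p x)) (dotl p (vec p y)) with hg
  have hmem : ∀ z : Pt p, vec p z ⬝ᵥ vec p x = 0 → vec p z ⬝ᵥ vec p y = 0 →
      vec p z ∈ LinearMap.ker g := by
    intro z h1 h2
    rw [LinearMap.mem_ker, hg, LinearMap.prod_apply]
    simp only [Function.prod, dotl_apply]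
    rw [h1, h2]
    rfl
  have hl : vec p ℓ ∈ LinearMap.ker g := hmem ℓ (by rwa [dotProduct_comm]) (by rwa [dotProduct_comm])
  have hl' : vec p ℓ' ∈ LinearMap.ker g := hmem ℓ' (by rwa [dotProduct_comm]) (by rwa [dotProduct_comm])
  by_cases htop : LinearMap.range g = ⊤
  · -- then kernel is 1-dimensional, so ℓ and ℓ' would be proportional: contradiction
    exfalso
    have hrk : Module.finrank (ZMod p) (LinearMap.ker g) = 1 := by
      have := LinearMap.finrank_range_add_finrank_ker g
      rw [htop, finrank_top, finFF, finrank_V3] at this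
      omega
    have hsp : Submodule.span (ZMod p) {vec p ℓ} = LinearMap.ker g := by
      apply Submodule.eq_of_le_of_finrank_le
      · rw [Submodule.span_le, Set.singleton_subset_iff]; exact hl
      · rw [hrk, finrank_span_singleton (vec_ne_zero ℓ)]
    rw [← hsp, Submodule.mem_span_singleton] at hl'
    obtain ⟨c, hc⟩ := hl'
    have hc0 : c ≠ 0 := by
      intro h
      rw [h, zero_smul] at hc
      exact vec_ne_zero ℓ' hc.symm
    exact hne (pt_eq_of_smul ℓ' ℓ c hc0 hc.symm).symm
  · -- range is proper, hence vec x and vec y are proportional, so x = y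
    have hW1 : Module.finrank (ZMod p) (LinearMap.range g) ≤ 1 := by
      have := Submodule.finrank_lt htop
      rw [finFF] at this
      omega
    -- find (c, d) spanning the range (or range = ⊥)
    have key : ∃ st : ZMod p × ZMod p, st ≠ 0 ∧
        ∀ v : Fin 3 → ZMod p, st.1 * (v ⬝ᵥ vec p x) + st.2 * (v ⬝ᵥ vec p y) = 0 := by
      by_cases hbot : LinearMap.range g = ⊥
      · refine ⟨(1, 0), by simp, ?_⟩
        intro v
        have : g v ∈ (⊥ : Submodule (ZMod p) (ZMod p × ZMod p)) := by
          rw [← hbot]; exact LinearMap.mem_range_self g v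
        rw [Submodule.mem_bot] at this
        have h1 : v ⬝ᵥ vec p x = 0 := congrArg Prod.fst this
        rw [h1]; ring
      · obtain ⟨cd, hcd, hcd0⟩ := (Submodule.ne_bot_iff _).mp hbot
        have hsp : Submodule.span (ZMod p) {cd} = LinearMap.range g := by
          apply Submodule.eq_of_le_of_finrank_le
          · rw [Submodule.span_le, Set.singleton_subset_iff]; exact hcd
          · rw [finrank_span_singleton hcd0]; exact hW1
        refine ⟨(cd.2, -cd.1), ?_, ?_⟩
        · intro h
          apply hcd0
          have h1 := congrArg Prod.fst h
          have h2 := congrArg Prod.snd h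
          simp only at h1 h2
          ext
          · simpa using h2
          · exact h1
        · intro v
          have : g v ∈ Submodule.span (ZMod p) {cd} := by
            rw [hsp]; exact LinearMap.mem_range_self g v
          rw [Submodule.mem_span_singleton] at this
          obtain ⟨e, he⟩ := this
          have h1 : v ⬝ᵥ vec p x = e * cd.1 := by
            have := congrArg Prod.fst he.symm
            simpa [hg, LinearMap.prod_apply, Pi.prod, dotl_apply] using this
          have h2 : v ⬝ᵥ vec p y = e * cd.2 := by
            have := congrArg Prod.snd he.symm
            simpa [hg, LinearMap.prod_apply, Pi.prod, dotl_apply] using this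
          rw [h1, h2]; ring
    obtain ⟨⟨s, t⟩, hst0, hst⟩ := key
    have hzero : s • vec p x + t • vec p y = 0 := by
      apply dot_nondeg
      intro v
      rw [dotProduct_add, dotProduct_smul, dotProduct_smul, smul_eq_mul, smul_eq_mul]
      exact hst v
    by_cases hs : s = 0
    · exfalso
      have ht : t ≠ 0 := by
        intro h
        apply hst0
        rw [hs, h]
        rfl
      rw [hs, zero_smul, zero_add] at hzero
      exact vec_ne_zero y (smul_eq_zero.mp hzero |>.resolve_left ht)
    · have h1 : s • vec p x = -(t • vec p y) := eq_neg_of_add_eq_zero_left hzero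
      have h2 : vec p x = (-(s⁻¹ * t)) • vec p y := by
        calc vec p x = s⁻¹ • (s • vec p x) := (inv_smul_smul₀ hs _).symm
          _ = s⁻¹ • -(t • vec p y) := by rw [h1]
          _ = (-(s⁻¹ * t)) • vec p y := by rw [smul_neg, smul_smul, neg_smul]
      have hc : (-(s⁻¹ * t)) ≠ 0 := by
        intro h
        rw [h, zero_smul] at h2
        exact vec_ne_zero x h2
      exact (pt_eq_of_smul x y _ hc h2).symm

end Plane2

section Zig

/-- The zigzag enumeration of `ZMod M` starting at `k`:
`k, k+1, k-1, k+2, k-2, ...` -/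
def zig (M k : ℕ) (i : Fin M) : ZMod M :=
  if Even i.val then (k : ZMod M) - ((i.val / 2 : ℕ) : ZMod M)
  else (k : ZMod M) + ((i.val / 2 + 1 : ℕ) : ZMod M)

variable {M : ℕ} (hM : 2 ≤ M) (hMe : Even M)

lemma castInj {a b : ℕ} (ha : a < M) (hb : b < M) (h : (a : ZMod M) = b) : a = b := by
  have : NeZero M := ⟨by omega⟩
  have := congrArg ZMod.val h
  rwa [ZMod.val_cast_of_lt ha, ZMod.val_cast_of_lt hb] at this

include hM hMe in
lemma zig_injective (k : ℕ) : Function.Injective (zig M k) := by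
  have : NeZero M := ⟨by omega⟩
  intro i j h
  unfold zig at h
  have hi2 : i.val / 2 < M := by have := i.2; omega
  have hj2 : j.val / 2 < M := by have := j.2; omega
  obtain ⟨m, hm⟩ := hMe
  by_cases hi : Even i.val <;> by_cases hj : Even j.val <;>
    simp only [hi, hj, if_true, if_false] at h
  · -- both even
    have : ((i.val / 2 : ℕ) : ZMod M) = ((j.val / 2 : ℕ) : ZMod M) := by
      linear_combination -h
    have := castInj hi2 hj2 this
    rw [Nat.even_iff] at hi hj
    apply Fin.ext
    omega
  · -- i even, j odd
    exfalso
    have hd : ((i.val / 2 + (j.val / 2 + 1) : ℕ) : ZMod M) = 0 := by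
      push_cast
      push_cast at h
      linear_combination -h
    rw [ZMod.natCast_eq_zero_iff] at hd
    obtain ⟨c, hc⟩ := hd
    rw [Nat.even_iff] at hi
    rw [Nat.even_iff] at hj
    have hib := i.2
    have hjb := j.2
    rcases Nat.eq_zero_or_pos c with rfl | hcp
    · omega
    · have hMc : M ≤ M * c := Nat.le_mul_of_pos_right M hcp
      omega
  · -- i odd, j even
    exfalso
    have hd : ((j.val / 2 + (i.val / 2 + 1) : ℕ) : ZMod M) = 0 := by
      push_cast
      push_cast at h
      linear_combination h
    rw [ZMod.natCast_eq_zero_iff] at hd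
    obtain ⟨c, hc⟩ := hd
    rw [Nat.even_iff] at hi
    rw [Nat.even_iff] at hj
    have hib := i.2
    have hjb := j.2
    rcases Nat.eq_zero_or_pos c with rfl | hcp
    · omega
    · have hMc : M ≤ M * c := Nat.le_mul_of_pos_right M hcp
      omega
  · -- both odd
    have : ((i.val / 2 + 1 : ℕ) : ZMod M) = ((j.val / 2 + 1 : ℕ) : ZMod M) := by
      linear_combination h
    have := castInj (by omega) (by omega) this
    rw [Nat.even_iff] at hi hj
    apply Fin.ext
    omega

include hM hMe in
lemma zig_surjective (k : ℕ) : Function.Surjective (zig M k) := by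
  have : NeZero M := ⟨by omega⟩
  have hbij := (Fintype.bijective_iff_injective_and_card (zig M k)).mpr
    ⟨zig_injective hM hMe k, by simp [ZMod.card]⟩
  exact hbij.surjective

lemma zig_adj_sum (k : ℕ) {i j : Fin M} (h : (SimpleGraph.pathGraph M).Adj i j) :
    zig M k i + zig M k j = ((2 * k : ℕ) : ZMod M) ∨
    zig M k i + zig M k j = ((2 * k + 1 : ℕ) : ZMod M) := by
  have key : ∀ a b : Fin M, a.val + 1 = b.val →
      zig M k a + zig M k b = ((2 * k : ℕ) : ZMod M) ∨
      zig M k a + zig M k b = ((2 * k + 1 : ℕ) : ZMod M) := by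
    intro a b hab
    unfold zig
    by_cases ha : Even a.val
    · have hb : ¬ Even b.val := by rw [Nat.even_iff] at ha ⊢; omega
      have hdiv : b.val / 2 = a.val / 2 := by rw [Nat.even_iff] at ha; omega
      simp only [ha, hb, if_true, if_false, hdiv]
      right
      push_cast
      ring
    · have hb : Even b.val := by rw [Nat.even_iff] at ha ⊢; omega
      have hdiv : b.val / 2 = a.val / 2 + 1 := by rw [Nat.even_iff] at hb; omega
      simp only [ha, hb, if_true, if_false, hdiv]
      left
      push_cast
      ring
  rw [SimpleGraph.pathGraph_adj] at h
  rcases h with h | h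
  · exact key i j h
  · rcases key j i h with h' | h'
    · left; rw [add_comm]; exact h'
    · right; rw [add_comm]; exact h'

lemma pathGraph_support_univ (hM : 2 ≤ M) :
    (SimpleGraph.pathGraph M).support = Set.univ := by
  ext i
  simp only [Set.mem_univ, iff_true, SimpleGraph.mem_support]
  by_cases h : i.val + 1 < M
  · exact ⟨⟨i.val + 1, h⟩, by rw [SimpleGraph.pathGraph_adj]; left; rfl⟩
  · refine ⟨⟨i.val - 1, by omega⟩, ?_⟩
    rw [SimpleGraph.pathGraph_adj]
    right
    have := i.2
    simp only
    omega

end Zig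

/-- Let `p` be an odd prime and `n = p² + p + 1`.  Then the complete graph `K_n`
contains `n(p+1)/2` pairwise edge-disjoint trees (each with at least one edge) such that
every two of the trees share at least one vertex.  (Equivalently, the line graph of `K_n`
has a clique minor of order `n(p+1)/2`.) -/
theorem stmt_14 (p : ℕ) (hp : p.Prime) (hodd : Odd p) (n : ℕ) (hn : n = p ^ 2 + p + 1) :
    ∃ T : Fin (n * (p + 1) / 2) → SimpleGraph (Fin n),
      (∀ i, (T i).edgeSet.Nonempty) ∧
      (∀ i, (T i).IsAcyclic) ∧
      (∀ i, ((T i).induce (T i).support).Connected) ∧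
      (Pairwise fun i j => Disjoint (T i).edgeSet (T j).edgeSet) ∧
      (∀ i j, ((T i).support ∩ (T j).support).Nonempty) := by
  haveI : Fact p.Prime := ⟨hp⟩
  haveI : NeZero p := ⟨hp.pos.ne'⟩
  haveI : NeZero (p + 1) := ⟨Nat.succ_ne_zero p⟩
  have hp3 : 3 ≤ p := by
    rcases hodd with ⟨r, hr⟩
    have := hp.two_le
    omega
  have hdvd : 2 ∣ (p + 1) := by rcases hodd with ⟨r, hr⟩; omega
  have hM2 : 2 ≤ p + 1 := by omega
  have hMe : Even (p + 1) := by rcases hodd with ⟨r, hr⟩; exact ⟨r + 1, by omega⟩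
  have hcardPt : Fintype.card (Pt p) = n := by
    have : Fintype.card (Pt p) = p * p + (p + 1) := by simp [ZMod.card]
    rw [this, hn]
    ring
  have ePt : Pt p ≃ Fin n := Fintype.equivOfCardEq (by rw [hcardPt, Fintype.card_fin])
  have eZ : ZMod (p + 1) ≃ (ZMod p ⊕ Unit) := Fintype.equivOfCardEq (by simp [ZMod.card])
  choose g hginj hgrange using exists_line_param (p := p)
  have hIdxcard : Fintype.card (Fin (n * (p + 1) / 2)) =
      Fintype.card (Pt p × Fin ((p + 1) / 2)) := by
    rw [Fintype.card_fin, Fintype.card_prod, hcardPt, Fintype.card_fin,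
      Nat.mul_div_assoc n hdvd]
  have eIdx : Fin (n * (p + 1) / 2) ≃ Pt p × Fin ((p + 1) / 2) :=
    Fintype.equivOfCardEq hIdxcard
  set A : Pt p → ZMod (p + 1) → Fin n := fun ℓ x => ePt (g ℓ (eZ x)) with hA
  have hAinj : ∀ ℓ, Function.Injective (A ℓ) :=
    fun ℓ => ePt.injective.comp ((hginj ℓ).comp eZ.injective)
  set emb : Pt p → Fin ((p + 1) / 2) → (Fin (p + 1) ↪ Fin n) := fun ℓ k =>
    ⟨fun i => A ℓ (zig (p + 1) k.val i),
      (hAinj ℓ).comp (zig_injective hM2 hMe k.val)⟩ with hemb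
  have hembrange : ∀ ℓ k, Set.range (emb ℓ k) =
      ePt '' {x : Pt p | vec p x ⬝ᵥ vec p ℓ = 0} := by
    intro ℓ k
    ext z
    constructor
    · rintro ⟨a, rfl⟩
      refine ⟨g ℓ (eZ (zig (p + 1) k.val a)), ?_, rfl⟩
      rw [← hgrange ℓ]
      exact Set.mem_range_self _
    · rintro ⟨w, hw, rfl⟩
      rw [← hgrange ℓ] at hw
      obtain ⟨u, rfl⟩ := hw
      obtain ⟨a, ha⟩ := zig_surjective hM2 hMe k.val (eZ.symm u)
      refine ⟨a, ?_⟩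
      show ePt (g ℓ (eZ (zig (p + 1) k.val a))) = ePt (g ℓ u)
      rw [ha, Equiv.apply_symm_apply]
  have hsupp : ∀ ℓ k, ((SimpleGraph.pathGraph (p + 1)).map (emb ℓ k)).support =
      ePt '' {x : Pt p | vec p x ⬝ᵥ vec p ℓ = 0} := by
    intro ℓ k
    rw [support_map_graph, pathGraph_support_univ hM2, Set.image_univ, hembrange]
  have hbound : ∀ k : Fin ((p + 1) / 2), 2 * k.val + 1 < p + 1 := by
    intro k
    have := k.2
    omega
  refine ⟨fun i => (SimpleGraph.pathGraph (p + 1)).map (emb (eIdx i).1 (eIdx i).2),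
    ?_, ?_, ?_, ?_, ?_⟩
  · -- nonempty edge sets
    intro i
    refine ⟨s(emb (eIdx i).1 (eIdx i).2 ⟨0, by omega⟩, emb (eIdx i).1 (eIdx i).2 ⟨1, by omega⟩), ?_⟩
    rw [SimpleGraph.mem_edgeSet, SimpleGraph.map_adj]
    refine ⟨⟨0, by omega⟩, ⟨1, by omega⟩, ?_, rfl, rfl⟩
    rw [SimpleGraph.pathGraph_adj]
    left
    rfl
  · -- acyclic
    intro i
    exact isAcyclic_map _ (pathGraph_isAcyclic _)
  · -- connected on support
    intro i
    have h := hsupp (eIdx i).1 (eIdx i).2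
    rw [h, ← hembrange (eIdx i).1 (eIdx i).2]
    exact connected_induce_map _ (SimpleGraph.pathGraph_connected p)
  · -- edge-disjoint
    intro i j hij
    have hne : eIdx i ≠ eIdx j := fun h => hij (eIdx.injective h)
    rw [Set.disjoint_left]
    intro e he1 he2
    induction e using Sym2.ind with
    | _ x y =>
    rw [SimpleGraph.mem_edgeSet] at he1 he2
    have hxy : x ≠ y := he1.ne
    rw [SimpleGraph.map_adj] at he1 he2
    obtain ⟨a1, b1, hab1, hxa1, hyb1⟩ := he1
    obtain ⟨a2, b2, hab2, hxa2, hyb2⟩ := he2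
    simp only [hemb, Function.Embedding.coeFn_mk] at hxa1 hyb1 hxa2 hyb2
    by_cases hll : (eIdx i).1 = (eIdx j).1
    · -- same line, different zigzag index
      have hkk : (eIdx i).2 ≠ (eIdx j).2 := by
        intro h
        exact hne (Prod.ext hll h)
      rw [← hll] at hxa2 hyb2
      have hza : zig (p + 1) (eIdx i).2.val a1 = zig (p + 1) (eIdx j).2.val a2 :=
        hAinj _ (hxa1.trans hxa2.symm)
      have hzb : zig (p + 1) (eIdx i).2.val b1 = zig (p + 1) (eIdx j).2.val b2 :=
        hAinj _ (hyb1.trans hyb2.symm)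
      have hs1 := zig_adj_sum (M := p + 1) (eIdx i).2.val hab1
      have hs2 := zig_adj_sum (M := p + 1) (eIdx j).2.val hab2
      rw [← hza, ← hzb] at hs2
      have hb1 := hbound (eIdx i).2
      have hb2 := hbound (eIdx j).2
      apply hkk
      apply Fin.ext
      rcases hs1 with h1 | h1 <;> rcases hs2 with h2 | h2 <;>
        · have := castInj (M := p + 1) (by omega) (by omega) (h1.symm.trans h2)
          omega
    · -- different lines: would share two points
      have hmem : ∀ (ℓ : Pt p) (k : Fin ((p + 1) / 2)) (c : Fin (p + 1)),
          g ℓ (eZ (zig (p + 1) k.val c)) ∈ {x : Pt p | vec p x ⬝ᵥ vec p ℓ = 0} := by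
        intro ℓ k c
        rw [← hgrange ℓ]
        exact Set.mem_range_self _
      set px1 := g (eIdx i).1 (eZ (zig (p + 1) (eIdx i).2.val a1)) with hpx1
      set px2 := g (eIdx j).1 (eZ (zig (p + 1) (eIdx j).2.val a2)) with hpx2
      set py1 := g (eIdx i).1 (eZ (zig (p + 1) (eIdx i).2.val b1)) with hpy1
      set py2 := g (eIdx j).1 (eZ (zig (p + 1) (eIdx j).2.val b2)) with hpy2
      have hxx : px1 = px2 := ePt.injective (hxa1.trans hxa2.symm)
      have hyy : py1 = py2 := ePt.injective (hyb1.trans hyb2.symm)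
      obtain ⟨z, hz, hzuniq⟩ := line_inter hll
      have h1 : px1 = z := hzuniq px1 ⟨hmem _ _ _, hxx ▸ hmem _ _ _⟩
      have h2 : py1 = z := hzuniq py1 ⟨hmem _ _ _, hyy ▸ hmem _ _ _⟩
      apply hxy
      rw [← hxa1, ← hyb1]
      show ePt px1 = ePt py1
      rw [h1, h2]
  · -- supports intersect
    intro i j
    rw [hsupp, hsupp]
    by_cases hll : (eIdx i).1 = (eIdx j).1
    · rw [hll]
      refine ⟨ePt (g (eIdx j).1 (Sum.inr ())), ?_, ?_⟩ <;>
      · refine ⟨g (eIdx j).1 (Sum.inr ()), ?_, rfl⟩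
        rw [← hgrange]
        exact Set.mem_range_self _
    · obtain ⟨z, ⟨hz1, hz2⟩, _⟩ := line_inter hll
      exact ⟨ePt z, ⟨z, hz1, rfl⟩, ⟨z, hz2, rfl⟩⟩
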